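/- Suppose ‖q(t)‖ = ‖q_f(t)‖-related bounds hold: ‖q(t)‖ ≤ 1 and ‖q_f(t) − q(t)‖ ≤ ε_q for all t ≥ 0, and let K_o be symmetric positive definite with λ_min(K_o) − λ_max(K_o)·ε_q =: λ_o > 0. Then for all ξ ∈ ℝ³ and all t, the quadratic form satisfies ξ^T K_o J(q_f(t))^T J(q(t)) ξ ≥ λ_o ‖ξ‖², i.e., the Jacobian J_o = −(1/2)K_o J(q_f)^T J(q) satisfies ξ^T J_o ξ ≤ −(λ_o/2)‖ξ‖². -/

import Mathlib

open Matrix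

noncomputable def skew (u : Fin 3 → ℝ) : Matrix (Fin 3) (Fin 3) ℝ :=
  !![0, -u 2, u 1; u 2, 0, -u 0; -u 1, u 0, 0]

noncomputable def Jq (x : Fin 4 → ℝ) : Matrix (Fin 4) (Fin 3) ℝ :=
  Matrix.of (Fin.cons (fun j => -x j.succ)
    (fun i => (x 0 • (1 : Matrix (Fin 3) (Fin 3) ℝ) + skew (fun k => x k.succ)) i))

lemma Jq_inner_self (x : Fin 4 → ℝ) (u v : Fin 3 → ℝ) :
    (Jq x *ᵥ u) ⬝ᵥ (Jq x *ᵥ v) = (∑ i, x i ^ 2) * (u ⬝ᵥ v) := by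
  simp [Jq, skew, Matrix.mulVec, dotProduct, Fin.sum_univ_succ, Matrix.one_apply]
  ring

lemma Jq_split (a f : Fin 4 → ℝ) (w : Fin 3 → ℝ) (z : Fin 4 → ℝ) :
    (Jq f *ᵥ w) ⬝ᵥ z = (Jq a *ᵥ w) ⬝ᵥ z + (Jq (f - a) *ᵥ w) ⬝ᵥ z := by
  simp [Jq, skew, Matrix.mulVec, dotProduct, Fin.sum_univ_succ, Matrix.one_apply]
  ring

lemma dnn {n : ℕ} (v : Fin n → ℝ) : 0 ≤ v ⬝ᵥ v :=
  Finset.sum_nonneg fun i _ => mul_self_nonneg _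

lemma dsq {n : ℕ} (v : Fin n → ℝ) : v ⬝ᵥ v = ∑ i, v i ^ 2 := by
  simp [dotProduct, sq]

section main
variable (K : Matrix (Fin 3) (Fin 3) ℝ)

lemma Kpd (hKpd : K.PosDef) : ∀ v : Fin 3 → ℝ, v ≠ 0 → 0 < v ⬝ᵥ (K *ᵥ v) := by
  intro v hv
  simpa using (Matrix.posDef_iff_dotProduct_mulVec.mp hKpd).2 hv

lemma Kpsd (hKpd : K.PosDef) (v : Fin 3 → ℝ) : 0 ≤ v ⬝ᵥ (K *ᵥ v) := by
  rcases eq_or_ne v 0 with h | h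
  · simp [h]
  · exact (Kpd K hKpd v h).le

lemma Ksymm (hKs : K.IsSymm) (u v : Fin 3 → ℝ) :
    u ⬝ᵥ (K *ᵥ v) = (K *ᵥ u) ⬝ᵥ v := by
  conv_lhs => rw [Matrix.dotProduct_mulVec, ← hKs, Matrix.vecMul_transpose]

lemma csK (hKs : K.IsSymm) (hKpd : K.PosDef) (u v : Fin 3 → ℝ) :
    (u ⬝ᵥ (K *ᵥ v)) ^ 2 ≤ (u ⬝ᵥ (K *ᵥ u)) * (v ⬝ᵥ (K *ᵥ v)) := by
  set A := u ⬝ᵥ (K *ᵥ u) with hA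
  set B := u ⬝ᵥ (K *ᵥ v) with hB
  set C := v ⬝ᵥ (K *ᵥ v) with hC
  have hCnn : 0 ≤ C := Kpsd K hKpd v
  rcases eq_or_lt_of_le hCnn with h0 | h0
  · have hv : v = 0 := by
      by_contra hv
      exact absurd (Kpd K hKpd v hv) (by rw [← hC, ← h0]; exact lt_irrefl 0)
    have hB0 : B = 0 := by simp [hB, hv]
    have hC0 : C = 0 := by simp [hC, hv]
    rw [hB0, hC0]; simp
  · have key : 0 ≤ (C • u - B • v) ⬝ᵥ (K *ᵥ (C • u - B • v)) := Kpsd K hKpd _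
    have expand : (C • u - B • v) ⬝ᵥ (K *ᵥ (C • u - B • v)) =
        C ^ 2 * A - 2 * C * B ^ 2 + B ^ 2 * C := by
      simp only [Matrix.mulVec_sub, Matrix.mulVec_smul, sub_dotProduct,
        dotProduct_sub, smul_dotProduct, dotProduct_smul,
        smul_eq_mul]
      rw [← hA, ← hB, ← hC]
      have : v ⬝ᵥ (K *ᵥ u) = B := by rw [Ksymm K hKs v u, dotProduct_comm, hB]
      rw [this]; ring
    rw [expand] at key
    nlinarith
end main

set_option maxHeartbeats 1000000 in
theorem stmt15 (q qf : ℝ → Fin 4 → ℝ) (εq lammin lammax lamo : ℝ) (hεq : 0 < εq)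
    (K : Matrix (Fin 3) (Fin 3) ℝ) (hKs : K.IsSymm) (hKpd : K.PosDef)
    (hmin : ∀ v : Fin 3 → ℝ, lammin * (v ⬝ᵥ v) ≤ v ⬝ᵥ (K *ᵥ v))
    (hmax : ∀ v : Fin 3 → ℝ, v ⬝ᵥ (K *ᵥ v) ≤ lammax * (v ⬝ᵥ v))
    (hq : ∀ t, 0 ≤ t → ∑ i, q t i ^ 2 = 1)
    (hqf : ∀ t, 0 ≤ t → Real.sqrt (∑ i, (qf t i - q t i) ^ 2) ≤ εq)
    (hlamo : lamo = lammin - lammax * εq) (hpos : 0 < lamo) :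
    ∀ t, 0 ≤ t → ∀ ξ : Fin 3 → ℝ,
      lamo * (ξ ⬝ᵥ ξ) ≤ ξ ⬝ᵥ ((K * (Jq (qf t))ᵀ * Jq (q t)) *ᵥ ξ) ∧
      ξ ⬝ᵥ ((-(1 / 2 : ℝ) • (K * (Jq (qf t))ᵀ * Jq (q t))) *ᵥ ξ) ≤ -(lamo / 2) * (ξ ⬝ᵥ ξ) := by
  intro t ht ξ
  set a := q t with ha
  set f := qf t with hf
  set e : Fin 4 → ℝ := f - a with he
  set w : Fin 3 → ℝ := K *ᵥ ξ with hw
  have h5 : (0:ℝ) ≤ ξ ⬝ᵥ ξ := dnn ξ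
  have h6 : (0:ℝ) ≤ w ⬝ᵥ w := dnn w
  -- positivity of lammax
  have hone : (fun _ => (1:ℝ) : Fin 3 → ℝ) ≠ 0 := by
    intro h; have := congrFun h 0; norm_num at this
  have hlmax : 0 < lammax := by
    have h1 := Kpd K hKpd _ hone
    have h2 := hmax (fun _ => (1:ℝ))
    have h3 : (fun _ => (1:ℝ) : Fin 3 → ℝ) ⬝ᵥ (fun _ => (1:ℝ)) = 3 := by
      simp [dotProduct, Fin.sum_univ_three]
    rw [h3] at h2
    nlinarith
  -- main rewriting of the quadratic form
  have hQF : ξ ⬝ᵥ ((K * (Jq f)ᵀ * Jq a) *ᵥ ξ) = (Jq f *ᵥ w) ⬝ᵥ (Jq a *ᵥ ξ) := by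
    rw [← Matrix.mulVec_mulVec, ← Matrix.mulVec_mulVec, Ksymm K hKs,
      Matrix.dotProduct_mulVec, Matrix.vecMul_transpose]
  set c : ℝ := (Jq e *ᵥ w) ⬝ᵥ (Jq a *ᵥ ξ) with hc
  have hsplit : (Jq f *ᵥ w) ⬝ᵥ (Jq a *ᵥ ξ) =
      (Jq a *ᵥ w) ⬝ᵥ (Jq a *ᵥ ξ) + c := Jq_split a f w _
  have hqa : (∑ i, a i ^ 2) = 1 := hq t ht
  have hterm1 : (Jq a *ᵥ w) ⬝ᵥ (Jq a *ᵥ ξ) = ξ ⬝ᵥ (K *ᵥ ξ) := by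
    rw [Jq_inner_self, hqa, one_mul, hw, dotProduct_comm]
  -- bound on e
  have hSnn : 0 ≤ ∑ i, e i ^ 2 := Finset.sum_nonneg fun i _ => sq_nonneg _
  have he2 : (∑ i, e i ^ 2) ≤ εq ^ 2 := by
    have h := hqf t ht
    have h2 : Real.sqrt (∑ i, e i ^ 2) ≤ εq := by
      simpa only [he, hf, ha, Pi.sub_apply] using h
    calc (∑ i, e i ^ 2) = Real.sqrt (∑ i, e i ^ 2) ^ 2 := (Real.sq_sqrt hSnn).symm
      _ ≤ εq ^ 2 := by
          have := Real.sqrt_nonneg (∑ i, e i ^ 2)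
          nlinarith
  -- bound on w
  have hww : w ⬝ᵥ w ≤ lammax ^ 2 * (ξ ⬝ᵥ ξ) := by
    have h1 : w ⬝ᵥ w = ξ ⬝ᵥ (K *ᵥ w) := by rw [Ksymm K hKs ξ w, hw]
    have h2 := csK K hKs hKpd ξ w
    have h3 := hmax ξ
    have h4 := hmax w
    have hKξξnn := Kpsd K hKpd ξ
    have hKwwnn := Kpsd K hKpd w
    have h8 : (ξ ⬝ᵥ (K *ᵥ ξ)) * (w ⬝ᵥ (K *ᵥ w)) ≤
        (lammax * (ξ ⬝ᵥ ξ)) * (lammax * (w ⬝ᵥ w)) :=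
      mul_le_mul h3 h4 hKwwnn (hKξξnn.trans h3)
    have h9 : (w ⬝ᵥ w) ^ 2 ≤ lammax ^ 2 * (ξ ⬝ᵥ ξ) * (w ⬝ᵥ w) := by
      have h10 := h2.trans h8
      rw [← h1] at h10
      nlinarith [h10]
    rcases eq_or_lt_of_le h6 with h0 | h0
    · rw [← h0]; exact mul_nonneg (sq_nonneg _) h5
    · nlinarith
  -- cross term bound
  have hcsq : c ^ 2 ≤ (εq * lammax * (ξ ⬝ᵥ ξ)) ^ 2 := by
    have cs : c ^ 2 ≤ ((Jq e *ᵥ w) ⬝ᵥ (Jq e *ᵥ w)) * ((Jq a *ᵥ ξ) ⬝ᵥ (Jq a *ᵥ ξ)) := by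
      have h := Finset.sum_mul_sq_le_sq_mul_sq Finset.univ (Jq e *ᵥ w) (Jq a *ᵥ ξ)
      rw [dsq (Jq e *ᵥ w), dsq (Jq a *ᵥ ξ)]
      exact h
    rw [Jq_inner_self, Jq_inner_self, hqa, one_mul] at cs
    have t1 : (∑ i, e i ^ 2) * (w ⬝ᵥ w) * (ξ ⬝ᵥ ξ) ≤ εq ^ 2 * (w ⬝ᵥ w) * (ξ ⬝ᵥ ξ) := by
      nlinarith [mul_nonneg h6 h5]
    have t2 : εq ^ 2 * (w ⬝ᵥ w) * (ξ ⬝ᵥ ξ) ≤ εq ^ 2 * (lammax ^ 2 * (ξ ⬝ᵥ ξ)) * (ξ ⬝ᵥ ξ) := by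
      nlinarith [mul_nonneg (mul_nonneg (sq_nonneg εq) h5) h5, sq_nonneg εq,
        mul_nonneg (sq_nonneg εq) h5]
    calc c ^ 2 ≤ (∑ i, e i ^ 2) * (w ⬝ᵥ w) * (ξ ⬝ᵥ ξ) := cs
      _ ≤ εq ^ 2 * (lammax ^ 2 * (ξ ⬝ᵥ ξ)) * (ξ ⬝ᵥ ξ) := t1.trans t2
      _ = (εq * lammax * (ξ ⬝ᵥ ξ)) ^ 2 := by ring
  have hXnn : 0 ≤ εq * lammax * (ξ ⬝ᵥ ξ) := mul_nonneg (mul_nonneg hεq.le hlmax.le) h5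
  have hcw : -(εq * lammax * (ξ ⬝ᵥ ξ)) ≤ c := by
    nlinarith [sq_nonneg (c + εq * lammax * (ξ ⬝ᵥ ξ)), hcsq, hXnn]
  have goal1 : lamo * (ξ ⬝ᵥ ξ) ≤ ξ ⬝ᵥ ((K * (Jq f)ᵀ * Jq a) *ᵥ ξ) := by
    rw [hQF, hsplit, hterm1, hlamo]
    have hm := hmin ξ
    nlinarith [hm, hcw]
  refine ⟨goal1, ?_⟩
  have h2 : ξ ⬝ᵥ ((-(1 / 2 : ℝ) • (K * (Jq f)ᵀ * Jq a)) *ᵥ ξ) =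
      -(1/2) * (ξ ⬝ᵥ ((K * (Jq f)ᵀ * Jq a) *ᵥ ξ)) := by
    rw [Matrix.smul_mulVec, dotProduct_smul, smul_eq_mul]
  rw [h2]
  linarith
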